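/- Let g ∈ F_q(t)[x₁,…,xₙ] be a polynomial all of whose exponents of t and of each x_i are divisible by p, with some coefficient equal to 1, and suppose ∂g/∂t = c·g for some c ∈ F_q(t). Then c = 0 and g = G^p for some G ∈ F_q(t)[x₁,…,xₙ]. -/

import Mathlib

open Polynomial in
private lemma ratfunc_D_algebraMap (p : ℕ) [Fact p.Prime] (Fq : Type*) [Field Fq] [Fintype Fq]
    [CharP Fq p] (D : Derivation Fq (RatFunc Fq) (RatFunc Fq)) (hD : D RatFunc.X = 1)
    (P : Polynomial Fq) :
    D (algebraMap (Polynomial Fq) (RatFunc Fq) P) = algebraMap _ _ (derivative P) := by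
  induction P using Polynomial.induction_on' with
  | add f g hf hg => simp [hf, hg]
  | monomial k a =>
    have hC : ∀ b : Fq, D (algebraMap (Polynomial Fq) (RatFunc Fq) (C b)) = 0 := by
      intro b
      rw [show (C b : Fq[X]) = algebraMap Fq Fq[X] b from rfl,
        ← IsScalarTower.algebraMap_apply, Derivation.map_algebraMap]
    rw [← C_mul_X_pow_eq_monomial, map_mul, map_pow, Derivation.leibniz,
      Derivation.leibniz_pow, hC, RatFunc.algebraMap_X, hD]
    simp only [smul_eq_mul, mul_one, smul_zero, add_zero, nsmul_eq_mul, derivative_C_mul_X_pow,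
      map_mul, map_natCast, RatFunc.algebraMap_C, map_pow, RatFunc.algebraMap_X]
    ring

open Polynomial in
private lemma poly_pth_power_of_deriv_zero (p : ℕ) [Fact p.Prime] (Fq : Type*) [Field Fq]
    [Fintype Fq] [CharP Fq p] (P : Polynomial Fq) (h : derivative P = 0) :
    ∃ Q : Polynomial Fq, Q ^ p = P := by
  refine ⟨map ((frobeniusEquiv Fq p).symm : Fq ≃+* Fq).toRingHom (contract p P), ?_⟩
  have h1 : P = expand Fq p (contract p P) := (expand_contract p h (Fact.out : p.Prime).ne_zero).symm
  rw [← map_frobenius_expand, map_expand, map_map]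
  have : (frobenius Fq p).comp ((frobeniusEquiv Fq p).symm : Fq ≃+* Fq).toRingHom =
      RingHom.id Fq := by
    ext x
    exact (frobeniusEquiv Fq p).apply_symm_apply x
  rw [this, map_id, ← h1]

private lemma ratfunc_pth_power (p : ℕ) [Fact p.Prime] (Fq : Type*) [Field Fq] [Fintype Fq]
    [CharP Fq p] (D : Derivation Fq (RatFunc Fq) (RatFunc Fq)) (hD : D RatFunc.X = 1)
    (f : RatFunc Fq) (hf : D f = 0) : ∃ h : RatFunc Fq, f = h ^ p := by
  rcases eq_or_ne f 0 with rfl | hne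
  · exact ⟨0, by rw [zero_pow (Fact.out : p.Prime).ne_zero]⟩
  set a := f.num with ha
  set b := f.denom with hb
  have hbne : b ≠ 0 := f.denom_ne_zero
  have hbne' : algebraMap (Polynomial Fq) (RatFunc Fq) b ≠ 0 :=
    RatFunc.algebraMap_ne_zero hbne
  have hfb : f * algebraMap (Polynomial Fq) (RatFunc Fq) b =
      algebraMap (Polynomial Fq) (RatFunc Fq) a := by
    rw [← RatFunc.num_div_denom f, div_mul_cancel₀ _ hbne']
  have hD1 : f * algebraMap (Polynomial Fq) (RatFunc Fq) (Polynomial.derivative b) =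
      algebraMap (Polynomial Fq) (RatFunc Fq) (Polynomial.derivative a) := by
    have := congrArg D hfb
    rwa [Derivation.leibniz, hf, smul_zero, add_zero, ratfunc_D_algebraMap p Fq D hD,
      ratfunc_D_algebraMap p Fq D hD, smul_eq_mul] at this
  -- a * b' = a' * b
  have key : a * Polynomial.derivative b = Polynomial.derivative a * b := by
    apply RatFunc.algebraMap_injective Fq
    have := congrArg (· * algebraMap (Polynomial Fq) (RatFunc Fq) b) hD1
    simp only [map_mul]
    calc algebraMap (Polynomial Fq) (RatFunc Fq) a *
          algebraMap (Polynomial Fq) (RatFunc Fq) (Polynomial.derivative b)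
        = (f * algebraMap (Polynomial Fq) (RatFunc Fq) b) *
          algebraMap (Polynomial Fq) (RatFunc Fq) (Polynomial.derivative b) := by rw [hfb]
      _ = (f * algebraMap (Polynomial Fq) (RatFunc Fq) (Polynomial.derivative b)) *
          algebraMap (Polynomial Fq) (RatFunc Fq) b := by ring
      _ = _ := by rw [hD1]
  have hcop : IsCoprime b a := (RatFunc.isCoprime_num_denom f).symm
  have hbdvd : b ∣ Polynomial.derivative b := by
    have : b ∣ a * Polynomial.derivative b := key ▸ Dvd.intro_left _ rfl
    exact hcop.dvd_of_dvd_mul_left this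
  have hb' : Polynomial.derivative b = 0 :=
    Polynomial.eq_zero_of_dvd_of_degree_lt hbdvd (Polynomial.degree_derivative_lt hbne)
  have ha' : Polynomial.derivative a = 0 := by
    have : Polynomial.derivative a * b = 0 := by rw [← key, hb', mul_zero]
    exact (mul_eq_zero.mp this).resolve_right hbne
  obtain ⟨A, hA⟩ := poly_pth_power_of_deriv_zero p Fq a ha'
  obtain ⟨B, hB⟩ := poly_pth_power_of_deriv_zero p Fq b hb'
  refine ⟨algebraMap (Polynomial Fq) (RatFunc Fq) A / algebraMap (Polynomial Fq) (RatFunc Fq) B, ?_⟩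
  rw [div_pow, ← map_pow, ← map_pow, hA, hB, RatFunc.num_div_denom]

/-- Let `K = F_q(t)` with `q` a power of the prime `p` and let `∂/∂t` be the `F_q`-linear
derivation of `K` with `∂t/∂t = 1`.  If `g ∈ K[x₁,…,xₙ]` has all exponents of each `xᵢ`
divisible by `p`, some coefficient of `g` equals `1`, and every coefficient `γ` of `g`
satisfies `∂γ/∂t = c·γ`, then `c = 0` and `g = G^p` for some `G ∈ K[x₁,…,xₙ]`. -/
theorem deriv_proportional_implies_pth_power (p : ℕ) [Fact p.Prime]
    (Fq : Type*) [Field Fq] [Fintype Fq] [CharP Fq p]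
    (n : ℕ) (g : MvPolynomial (Fin n) (RatFunc Fq)) (c : RatFunc Fq)
    (D : Derivation Fq (RatFunc Fq) (RatFunc Fq)) (hD : D RatFunc.X = 1)
    (hexp : ∀ m ∈ g.support, ∀ i, p ∣ m i)
    (hcoeff : ∀ m, D (MvPolynomial.coeff m g) = c * MvPolynomial.coeff m g)
    (hone : ∃ m, MvPolynomial.coeff m g = 1) :
    c = 0 ∧ ∃ G : MvPolynomial (Fin n) (RatFunc Fq), g = G ^ p := by
  obtain ⟨m₀, hm₀⟩ := hone
  have hc : c = 0 := by
    have := hcoeff m₀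
    rw [hm₀, Derivation.map_one_eq_zero, mul_one] at this
    exact this.symm
  refine ⟨hc, ?_⟩
  -- every coefficient is a p-th power
  have hco : ∀ m, ∃ h : RatFunc Fq, MvPolynomial.coeff m g = h ^ p := by
    intro m
    apply ratfunc_pth_power p Fq D hD
    rw [hcoeff m, hc, zero_mul]
  choose h hh using hco
  -- the "divide by p" map on exponents
  let half : (Fin n →₀ ℕ) → (Fin n →₀ ℕ) := fun m =>
    Finsupp.equivFunOnFinite.symm (fun i => m i / p)
  have hphalf : ∀ m ∈ g.support, p • half m = m := by
    intro m hm
    ext i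
    have : (p • half m) i = p * (m i / p) := by
      simp [half, Finsupp.smul_apply, Finsupp.equivFunOnFinite]
      exact Or.inl rfl
    rw [this, Nat.mul_div_cancel' (hexp m hm i)]
  refine ⟨∑ m ∈ g.support, MvPolynomial.monomial (half m) (h m), ?_⟩
  haveI : CharP (RatFunc Fq) p := charP_of_injective_algebraMap
    (algebraMap Fq (RatFunc Fq)).injective p
  rw [sum_pow_char]
  conv_lhs => rw [g.as_sum]
  apply Finset.sum_congr rfl
  intro m hm
  rw [MvPolynomial.monomial_pow, hphalf m hm, ← hh m]
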